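/- Let a, b > 0 with a + b = 1, and let A, B be bounded measurable subsets of ℝⁿ. Then vol(A)^a · vol(B)^b ≤ vol(a·A + b·B), where a·A + b·B = {a·x + b·y : x ∈ A, y ∈ B} and vol denotes Lebesgue measure (assuming the Minkowski combination is measurable). -/

import Mathlib

open MeasureTheory Bornology Pointwise
open Set
open scoped ENNReal NNReal


lemma oneDim_bm {S T : Set ℝ} (hS : IsCompact S) (hT : IsCompact T)
    (hSne : S.Nonempty) (hTne : T.Nonempty) :
    volume S + volume T ≤ volume (S + T) := by
  obtain ⟨x, hxS, hx⟩ := hS.exists_isGreatest hSne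
  obtain ⟨y, hyT, hy⟩ := hT.exists_isLeast hTne
  set S' := (· + y) '' S with hS'
  set T' := (x + ·) '' T with hT'
  have h1 : S' ⊆ S + T := by rintro z ⟨s, hs, rfl⟩; exact add_mem_add hs hyT
  have h2 : T' ⊆ S + T := by rintro z ⟨t, ht, rfl⟩; exact add_mem_add hxS ht
  have hinter : S' ∩ T' ⊆ {x + y} := by
    rintro z ⟨⟨s, hs, rfl⟩, ⟨t, ht, hzt⟩⟩
    have h1 : s ≤ x := hx hs
    have h2 : y ≤ t := hy ht
    have hzt' : x + t = s + y := hzt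
    have hst : s = x ∧ y = t := by constructor <;> linarith
    simp [hst.1]
  have hvS : volume S' = volume S := by
    rw [hS', Set.image_add_right, measure_preimage_add_right volume (-y) S]
  have hvT : volume T' = volume T := by
    rw [hT', Set.image_add_left, measure_preimage_add volume (-x) T]
  have hS'c : IsCompact S' := hS.image (continuous_add_right y)
  have hT'c : IsCompact T' := hT.image (continuous_add_left x)
  have hint0 : volume (S' ∩ T') = 0 :=
    le_antisymm ((measure_mono hinter).trans_eq (by simp)) (zero_le)
  calc volume S + volume T = volume S' + volume T' := by rw [hvS, hvT]
    _ = volume (S' ∪ T') + volume (S' ∩ T') :=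
        (measure_union_add_inter S' hT'c.measurableSet).symm
    _ = volume (S' ∪ T') := by rw [hint0, add_zero]
    _ ≤ volume (S + T) := measure_mono (union_subset h1 h2)

lemma ennreal_amgm {a b : ℝ} (ha : 0 < a) (hb : 0 < b) (hab : a + b = 1) (x y : ℝ≥0∞) :
    x ^ a * y ^ b ≤ ENNReal.ofReal a * x + ENNReal.ofReal b * y := by
  have ha' : ENNReal.ofReal a ≠ 0 := by simp [ha]
  have hb' : ENNReal.ofReal b ≠ 0 := by simp [hb]
  rcases eq_or_ne x ⊤ with rfl | hx
  · rcases eq_or_ne y 0 with rfl | hy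
    · simp [ENNReal.zero_rpow_of_pos hb]
    · rw [ENNReal.mul_top ha', top_add]; exact le_top
  rcases eq_or_ne y ⊤ with rfl | hy
  · rcases eq_or_ne x 0 with rfl | hx0
    · simp [ENNReal.zero_rpow_of_pos ha]
    · rw [ENNReal.mul_top hb', add_top]; exact le_top
  lift x to NNReal using hx
  lift y to NNReal using hy
  rw [← ENNReal.coe_rpow_of_nonneg x ha.le, ← ENNReal.coe_rpow_of_nonneg y hb.le,
    ← ENNReal.coe_mul, ENNReal.ofReal, ENNReal.ofReal, ← ENNReal.coe_mul, ← ENNReal.coe_mul,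
    ← ENNReal.coe_add, ENNReal.coe_le_coe]
  have := NNReal.geom_mean_le_arith_mean2_weighted (a.toNNReal) (b.toNNReal) x y ?_
  · convert this using 3 <;> simp [Real.coe_toNNReal _ ha.le, Real.coe_toNNReal _ hb.le]
  · have : (a + b).toNNReal = (1:ℝ).toNNReal := by rw [hab]
    rwa [Real.toNNReal_add ha.le hb.le, Real.toNNReal_one] at this

lemma scale_lintegral {F : ℝ → ℝ≥0∞} (hF : Measurable F) {k : ℝ} (hk : 0 < k) (c' : ℝ) :
    ∫⁻ u in Ioo 0 c', F (k * u) = ENNReal.ofReal k⁻¹ * ∫⁻ v in Ioo 0 (k * c'), F v := by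
  have hpre : (fun u => k * u) ⁻¹' (Ioo 0 (k * c')) = Ioo 0 c' := by
    ext u
    simp only [mem_preimage, mem_Ioo]
    constructor
    · rintro ⟨h1, h2⟩
      constructor
      · nlinarith
      · nlinarith
    · rintro ⟨h1, h2⟩
      exact ⟨by positivity, by nlinarith⟩
  have hmap : Measure.map (fun u => k * u) (volume.restrict (Ioo 0 c'))
      = ENNReal.ofReal k⁻¹ • volume.restrict (Ioo 0 (k * c')) := by
    rw [← hpre, ← Measure.restrict_map (measurable_const_mul k) measurableSet_Ioo,
      Real.map_volume_mul_left hk.ne', Measure.restrict_smul, abs_of_pos (inv_pos.mpr hk)]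
  rw [← lintegral_map hF (measurable_const_mul k), hmap, lintegral_smul_measure, smul_eq_mul]

lemma trunc_lintegral {F : ℝ → ℝ≥0∞} {M' : ℝ} (hM' : 0 < M')
    (hvanish : ∀ v, M' ≤ v → F v = 0) : ∫⁻ v in Ioo 0 M', F v = ∫⁻ v in Ioi 0, F v := by
  rw [← Ioo_union_Ici_eq_Ioi hM',
    lintegral_union measurableSet_Ici (by
      rw [Set.disjoint_left]; rintro v ⟨_, h2⟩ h3; exact absurd (mem_Ici.mp h3) (not_le.mpr h2))]
  have : ∫⁻ v in Ici M', F v = 0 := by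
    rw [setLIntegral_congr_fun measurableSet_Ici
      (fun v hv => hvanish v hv), lintegral_zero]
  rw [this, add_zero]

/-- key measure estimate: superlevel set of h' contains scaled sum of superlevel sets. -/
lemma superlevel_est {a b : ℝ} (ha : 0 < a) (hb : 0 < b) (hab : a + b = 1)
    {S T U : Set ℝ} (hSm : MeasurableSet S) (hTm : MeasurableSet T)
    (hSfin : volume S ≠ ⊤) (hTfin : volume T ≠ ⊤) (hUfin : volume U ≠ ⊤)
    (hSne : S.Nonempty) (hTne : T.Nonempty)
    (hsub : a • S + b • T ⊆ U) :
    ENNReal.ofReal a * volume S + ENNReal.ofReal b * volume T ≤ volume U := by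
  have ha1 : ENNReal.ofReal a ≤ 1 := by
    rw [← ENNReal.ofReal_one]; exact ENNReal.ofReal_le_ofReal (by linarith)
  have hb1 : ENNReal.ofReal b ≤ 1 := by
    rw [← ENNReal.ofReal_one]; exact ENNReal.ofReal_le_ofReal (by linarith)
  refine ENNReal.le_of_forall_pos_le_add fun ε hε hU => ?_
  have hε2 : (ε : ℝ≥0∞) / 2 ≠ 0 := by
    simp [ENNReal.div_eq_zero_iff, hε.ne']
  obtain ⟨K, hKS, hKc, hKv⟩ := hSm.exists_isCompact_lt_add hSfin hε2
  obtain ⟨L, hLT, hLc, hLv⟩ := hTm.exists_isCompact_lt_add hTfin hε2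
  obtain ⟨r₀, hr₀⟩ := hSne
  obtain ⟨s₀, hs₀⟩ := hTne
  set K' := insert r₀ K with hK'
  set L' := insert s₀ L with hL'
  have hK'S : K' ⊆ S := insert_subset hr₀ hKS
  have hL'T : L' ⊆ T := insert_subset hs₀ hLT
  have hK'c : IsCompact K' := hKc.insert r₀
  have hL'c : IsCompact L' := hLc.insert s₀
  have hbm : volume (a • K') + volume (b • L') ≤ volume (a • K' + b • L') :=
    oneDim_bm (hK'c.smul a) (hL'c.smul b)
      (Set.Nonempty.smul_set ⟨r₀, mem_insert _ _⟩) (Set.Nonempty.smul_set ⟨s₀, mem_insert _ _⟩)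
  have hvK : volume (a • K') = ENNReal.ofReal a * volume K' := by
    rw [Measure.addHaar_smul_of_nonneg volume ha.le K']; simp
  have hvL : volume (b • L') = ENNReal.ofReal b * volume L' := by
    rw [Measure.addHaar_smul_of_nonneg volume hb.le L']; simp
  have hsub2 : a • K' + b • L' ⊆ U :=
    (add_subset_add (smul_set_mono hK'S) (smul_set_mono hL'T)).trans hsub
  have hSK : volume S ≤ volume K' + ε / 2 :=
    (hKv.le).trans (add_le_add_left (measure_mono (subset_insert _ _)) _)
  have hTL : volume T ≤ volume L' + ε / 2 :=
    (hLv.le).trans (add_le_add_left (measure_mono (subset_insert _ _)) _)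
  calc ENNReal.ofReal a * volume S + ENNReal.ofReal b * volume T
      ≤ (ENNReal.ofReal a * volume K' + ε / 2) + (ENNReal.ofReal b * volume L' + ε / 2) := by
        gcongr
        · calc ENNReal.ofReal a * volume S ≤ ENNReal.ofReal a * (volume K' + ε / 2) := by gcongr
            _ = ENNReal.ofReal a * volume K' + ENNReal.ofReal a * (ε / 2) := by rw [mul_add]
            _ ≤ ENNReal.ofReal a * volume K' + ε / 2 := by
                gcongr; calc ENNReal.ofReal a * (ε/2) ≤ 1 * (ε/2) := by gcongr
                  _ = ε/2 := one_mul _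
        · calc ENNReal.ofReal b * volume T ≤ ENNReal.ofReal b * (volume L' + ε / 2) := by gcongr
            _ = ENNReal.ofReal b * volume L' + ENNReal.ofReal b * (ε / 2) := by rw [mul_add]
            _ ≤ ENNReal.ofReal b * volume L' + ε / 2 := by
                gcongr; calc ENNReal.ofReal b * (ε/2) ≤ 1 * (ε/2) := by gcongr
                  _ = ε/2 := one_mul _
    _ = volume (a • K') + volume (b • L') + ε := by
        rw [hvK, hvL, ← ENNReal.add_halves (ε : ℝ≥0∞)]; ring_nf
        rw [ENNReal.div_mul_cancel two_ne_zero ENNReal.ofNat_ne_top]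
    _ ≤ volume (a • K' + b • L') + ε := by exact add_le_add_left hbm _
    _ ≤ volume U + ε := add_le_add_left (measure_mono hsub2) _

/-- Layer-cake for a bounded-by-M ENNReal-valued measurable function. -/
lemma layercake_ennreal {f : ℝ → ℝ≥0∞} (hf : Measurable f) {M : ℝ≥0∞} (hM : M ≠ ⊤)
    (hfM : ∀ r, f r ≤ M) :
    ∫⁻ r, f r = ∫⁻ t in Ioi (0:ℝ), volume {r | ENNReal.ofReal t < f r} := by
  have hfr : ∀ r, f r ≠ ⊤ := fun r => (lt_of_le_of_lt (hfM r) hM.lt_top).ne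
  have h1 : ∫⁻ r, f r = ∫⁻ r, ENNReal.ofReal ((f r).toReal) := by
    refine lintegral_congr fun r => ?_
    rw [ENNReal.ofReal_toReal (hfr r)]
  rw [h1, lintegral_eq_lintegral_meas_lt volume
    (Filter.Eventually.of_forall fun r => ENNReal.toReal_nonneg) hf.ennreal_toReal.aemeasurable]
  refine setLIntegral_congr_fun measurableSet_Ioi (fun t ht => ?_)
  congr 1
  ext r
  simp only [mem_setOf_eq]
  rw [ENNReal.ofReal_lt_iff_lt_toReal (le_of_lt ht) (hfr r)]

lemma oneDim_pl {a b : ℝ} (ha : 0 < a) (hb : 0 < b) (hab : a + b = 1)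
    {f g h : ℝ → ℝ≥0∞} (hf : Measurable f) (hg : Measurable g) (hh : Measurable h)
    (hMtop : (⨆ r, f r) ≠ ⊤) (hNtop : (⨆ s, g s) ≠ ⊤)
    (hIf : ∫⁻ r, f r ≠ ⊤) (hIg : ∫⁻ s, g s ≠ ⊤)
    (hkey : ∀ r s, f r ^ a * g s ^ b ≤ h (a * r + b * s)) :
    (∫⁻ r, f r) ^ a * (∫⁻ s, g s) ^ b ≤ ∫⁻ t, h t := by
  rcases eq_or_ne (∫⁻ t, h t) ⊤ with htop | hIh
  · exact htop ▸ le_top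
  rcases eq_or_ne (∫⁻ r, f r) 0 with hf0 | hf0
  · rw [hf0, ENNReal.zero_rpow_of_pos ha, zero_mul]; exact zero_le
  rcases eq_or_ne (∫⁻ s, g s) 0 with hg0 | hg0
  · rw [hg0, ENNReal.zero_rpow_of_pos hb, mul_zero]; exact zero_le
  set M := ⨆ r, f r with hMdef
  set N := ⨆ s, g s with hNdef
  have hfM : ∀ r, f r ≤ M := fun r => le_iSup f r
  have hgN : ∀ s, g s ≤ N := fun s => le_iSup g s
  have hM0 : M ≠ 0 := by
    intro hM0
    apply hf0
    rw [lintegral_eq_zero_iff hf]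
    exact Filter.Eventually.of_forall fun r => le_antisymm (le_trans (hfM r) hM0.le) (zero_le)
  have hN0 : N ≠ 0 := by
    intro hN0
    apply hg0
    rw [lintegral_eq_zero_iff hg]
    exact Filter.Eventually.of_forall fun s => le_antisymm (le_trans (hgN s) hN0.le) (zero_le)
  set c : ℝ≥0∞ := M ^ a * N ^ b with hcdef
  have hMa0 : M ^ a ≠ 0 := by
    simp only [ne_eq, ENNReal.rpow_eq_zero_iff, not_or, not_and]
    exact ⟨fun h' => absurd h' hM0, fun h' => absurd h' hMtop⟩
  have hNb0 : N ^ b ≠ 0 := by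
    simp only [ne_eq, ENNReal.rpow_eq_zero_iff, not_or, not_and]
    exact ⟨fun h' => absurd h' hN0, fun h' => absurd h' hNtop⟩
  have hMatop : M ^ a ≠ ⊤ := ENNReal.rpow_ne_top_of_nonneg ha.le hMtop
  have hNbtop : N ^ b ≠ ⊤ := ENNReal.rpow_ne_top_of_nonneg hb.le hNtop
  have hc0 : c ≠ 0 := mul_ne_zero hMa0 hNb0
  have hctop : c ≠ ⊤ := ENNReal.mul_ne_top hMatop hNbtop
  -- truncated h
  set h' : ℝ → ℝ≥0∞ := fun t => min (h t) c with hh'def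
  have hh'm : Measurable h' := hh.min measurable_const
  have hh'le : ∀ t, h' t ≤ c := fun t => min_le_right _ _
  have hIh'le : ∫⁻ t, h' t ≤ ∫⁻ t, h t := lintegral_mono fun t => min_le_left _ _
  have hIh' : ∫⁻ t, h' t ≠ ⊤ := fun htop' => hIh (top_le_iff.mp (htop' ▸ hIh'le))
  -- real versions
  set M' := M.toReal with hM'def
  set N' := N.toReal with hN'def
  set c' := c.toReal with hc'def
  have hM'pos : 0 < M' := ENNReal.toReal_pos hM0 hMtop
  have hN'pos : 0 < N' := ENNReal.toReal_pos hN0 hNtop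
  have hc'pos : 0 < c' := ENNReal.toReal_pos hc0 hctop
  have hMM' : ENNReal.ofReal M' = M := ENNReal.ofReal_toReal hMtop
  have hNN' : ENNReal.ofReal N' = N := ENNReal.ofReal_toReal hNtop
  have hcc' : ENNReal.ofReal c' = c := ENNReal.ofReal_toReal hctop
  set kf := M' / c' with hkfdef
  set kg := N' / c' with hkgdef
  have hkfpos : 0 < kf := div_pos hM'pos hc'pos
  have hkgpos : 0 < kg := div_pos hN'pos hc'pos
  -- tail functions
  set F : ℝ → ℝ≥0∞ := fun u => volume {r | ENNReal.ofReal u < f r} with hFdef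
  set G : ℝ → ℝ≥0∞ := fun u => volume {s | ENNReal.ofReal u < g s} with hGdef
  set Φ : ℝ → ℝ≥0∞ := fun u => volume {t | ENNReal.ofReal u < h' t} with hΦdef
  have hFanti : Antitone F := fun u v huv =>
    measure_mono fun r hr => lt_of_le_of_lt (ENNReal.ofReal_le_ofReal huv) hr
  have hGanti : Antitone G := fun u v huv =>
    measure_mono fun s hs => lt_of_le_of_lt (ENNReal.ofReal_le_ofReal huv) hs
  have hΦanti : Antitone Φ := fun u v huv =>
    measure_mono fun t ht => lt_of_le_of_lt (ENNReal.ofReal_le_ofReal huv) ht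
  have hFm : Measurable F := hFanti.measurable
  have hGm : Measurable G := hGanti.measurable
  have hΦm : Measurable Φ := hΦanti.measurable
  -- layer cakes
  have layerF : ∫⁻ r, f r = ∫⁻ u in Ioi (0:ℝ), F u := layercake_ennreal hf hMtop hfM
  have layerG : ∫⁻ s, g s = ∫⁻ u in Ioi (0:ℝ), G u := layercake_ennreal hg hNtop hgN
  have layerΦ : ∫⁻ t, h' t = ∫⁻ u in Ioi (0:ℝ), Φ u := layercake_ennreal hh'm hctop hh'le
  -- the key pointwise estimate on (0, c')
  have hkeyΦ : ∀ u ∈ Ioo (0:ℝ) c',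
      ENNReal.ofReal a * F (kf * u) + ENNReal.ofReal b * G (kg * u) ≤ Φ u := by
    intro u hu
    obtain ⟨hu0, huc⟩ := hu
    have hfu0 : (0:ℝ) < kf * u := mul_pos hkfpos hu0
    have hgu0 : (0:ℝ) < kg * u := mul_pos hkgpos hu0
    set S := {r | ENNReal.ofReal (kf * u) < f r} with hSdef
    set T := {s | ENNReal.ofReal (kg * u) < g s} with hTdef
    set U := {t | ENNReal.ofReal u < h' t} with hUdef
    -- finiteness of the three measures, via Markov
    have markov : ∀ (φ : ℝ → ℝ≥0∞), Measurable φ → (∫⁻ x, φ x ≠ ⊤) → ∀ (v : ℝ), 0 < v →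
        volume {x | ENNReal.ofReal v < φ x} ≠ ⊤ := by
      intro φ hφ hφI v hv
      have h1 : {x | ENNReal.ofReal v < φ x} ⊆ {x | ENNReal.ofReal v ≤ φ x} := by
        intro x hx
        exact le_of_lt (show ENNReal.ofReal v < φ x from hx)
      have h2 := meas_ge_le_lintegral_div (μ := volume) hφ.aemeasurable
        (ε := ENNReal.ofReal v) (by simp [hv]) ENNReal.ofReal_ne_top
      have hv0 : ENNReal.ofReal v ≠ 0 := by simp [hv]
      exact (((measure_mono h1).trans h2).trans_lt (ENNReal.div_lt_top hφI hv0)).ne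
    have hSfin : volume S ≠ ⊤ := markov f hf hIf _ hfu0
    have hTfin : volume T ≠ ⊤ := markov g hg hIg _ hgu0
    have hUfin : volume U ≠ ⊤ := markov h' hh'm hIh' _ hu0
    -- nonemptiness
    have hSne : S.Nonempty := by
      have hlt : ENNReal.ofReal (kf * u) < M := by
        rw [← hMM']
        apply ENNReal.ofReal_lt_ofReal_iff hM'pos |>.mpr
        calc kf * u < kf * c' := by nlinarith
          _ = M' := div_mul_cancel₀ M' hc'pos.ne'
      obtain ⟨r, hr⟩ := lt_iSup_iff.mp (hMdef ▸ hlt)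
      exact ⟨r, hr⟩
    have hTne : T.Nonempty := by
      have hlt : ENNReal.ofReal (kg * u) < N := by
        rw [← hNN']
        apply ENNReal.ofReal_lt_ofReal_iff hN'pos |>.mpr
        calc kg * u < kg * c' := by nlinarith
          _ = N' := div_mul_cancel₀ N' hc'pos.ne'
      obtain ⟨s, hs⟩ := lt_iSup_iff.mp (hNdef ▸ hlt)
      exact ⟨s, hs⟩
    -- threshold identities
    have hofu : ENNReal.ofReal u < c := by
      rw [← hcc']; exact (ENNReal.ofReal_lt_ofReal_iff hc'pos).mpr huc
    have hofu0 : ENNReal.ofReal u ≠ 0 := by simp [hu0]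
    have hSthresh : ENNReal.ofReal (kf * u) = ENNReal.ofReal u / c * M := by
      rw [ENNReal.ofReal_mul (le_of_lt hkfpos), hkfdef,
        ENNReal.ofReal_div_of_pos hc'pos, hMM', hcc', div_eq_mul_inv, div_eq_mul_inv]
      ring
    have hTthresh : ENNReal.ofReal (kg * u) = ENNReal.ofReal u / c * N := by
      rw [ENNReal.ofReal_mul (le_of_lt hkgpos), hkgdef,
        ENNReal.ofReal_div_of_pos hc'pos, hNN', hcc', div_eq_mul_inv, div_eq_mul_inv]
      ring
    -- the containment
    have hsub : a • S + b • T ⊆ U := by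
      rintro z ⟨x, ⟨r, hr, rfl⟩, y, ⟨s, hs, rfl⟩, rfl⟩
      simp only [smul_eq_mul, hUdef, mem_setOf_eq]
      set lam := ENNReal.ofReal u / c with hlamdef
      have hlam1 : lam * c = ENNReal.ofReal u := ENNReal.div_mul_cancel hc0 hctop
      have hfr : lam * M < f r := by rw [← hSthresh]; exact hr
      have hgs : lam * N < g s := by rw [← hTthresh]; exact hs
      have hfrtop : f r ≠ ⊤ := fun h'' => hMtop (top_le_iff.mp (h'' ▸ hfM r))
      have hgstop : g s ≠ ⊤ := fun h'' => hNtop (top_le_iff.mp (h'' ▸ hgN s))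
      have h1 : (lam * M) ^ a < f r ^ a := ENNReal.rpow_lt_rpow hfr ha
      have h2 : (lam * N) ^ b < g s ^ b := ENNReal.rpow_lt_rpow hgs hb
      have h3 : (lam * M) ^ a * (lam * N) ^ b < f r ^ a * g s ^ b := by
        apply ENNReal.mul_lt_mul h1 h2
      have h4 : (lam * M) ^ a * (lam * N) ^ b = ENNReal.ofReal u := by
        rw [ENNReal.mul_rpow_of_nonneg _ _ ha.le, ENNReal.mul_rpow_of_nonneg _ _ hb.le]
        have : lam ^ a * M ^ a * (lam ^ b * N ^ b) = lam ^ a * lam ^ b * (M ^ a * N ^ b) := by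
          ring
        rw [this, ← ENNReal.rpow_add_of_nonneg a b ha.le hb.le, hab, ENNReal.rpow_one, ← hcdef,
          hlam1]
      have h5 : ENNReal.ofReal u < f r ^ a * g s ^ b := h4 ▸ h3
      have h6 : ENNReal.ofReal u < h (a * r + b * s) := lt_of_lt_of_le h5 (hkey r s)
      exact lt_min h6 hofu
    calc ENNReal.ofReal a * F (kf * u) + ENNReal.ofReal b * G (kg * u)
        = ENNReal.ofReal a * volume S + ENNReal.ofReal b * volume T := rfl
      _ ≤ volume U := superlevel_est ha hb hab
          (measurableSet_lt measurable_const hf) (measurableSet_lt measurable_const hg)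
          hSfin hTfin hUfin hSne hTne hsub
      _ = Φ u := rfl
  -- vanishing of tails
  have hFvanish : ∀ v, M' ≤ v → F v = 0 := by
    intro v hv
    have : {r | ENNReal.ofReal v < f r} = ∅ := by
      ext r
      simp only [mem_setOf_eq, mem_empty_iff_false, iff_false, not_lt]
      exact (hfM r).trans (hMM' ▸ ENNReal.ofReal_le_ofReal hv)
    rw [hFdef]; simp only [this, measure_empty]
  have hGvanish : ∀ v, N' ≤ v → G v = 0 := by
    intro v hv
    have : {s | ENNReal.ofReal v < g s} = ∅ := by
      ext s
      simp only [mem_setOf_eq, mem_empty_iff_false, iff_false, not_lt]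
      exact (hgN s).trans (hNN' ▸ ENNReal.ofReal_le_ofReal hv)
    rw [hGdef]; simp only [this, measure_empty]
  -- integral computations
  have hFcomp : ∫⁻ u in Ioo 0 c', F (kf * u) = c / M * ∫⁻ r, f r := by
    rw [scale_lintegral hFm hkfpos c']
    have h1 : kf * c' = M' := div_mul_cancel₀ M' hc'pos.ne'
    rw [h1, trunc_lintegral hM'pos hFvanish, ← layerF]
    congr 1
    rw [hkfdef, inv_div, ENNReal.ofReal_div_of_pos hM'pos, hcc', hMM']
  have hGcomp : ∫⁻ u in Ioo 0 c', G (kg * u) = c / N * ∫⁻ s, g s := by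
    rw [scale_lintegral hGm hkgpos c']
    have h1 : kg * c' = N' := div_mul_cancel₀ N' hc'pos.ne'
    rw [h1, trunc_lintegral hN'pos hGvanish, ← layerG]
    congr 1
    rw [hkgdef, inv_div, ENNReal.ofReal_div_of_pos hN'pos, hcc', hNN']
  -- main chain
  set X := ∫⁻ r, f r with hX
  set Y := ∫⁻ s, g s with hY
  have main : c * (ENNReal.ofReal a * (X / M) + ENNReal.ofReal b * (Y / N)) ≤ ∫⁻ t, h t := by
    calc c * (ENNReal.ofReal a * (X / M) + ENNReal.ofReal b * (Y / N))
        = ENNReal.ofReal a * (c / M * X) + ENNReal.ofReal b * (c / N * Y) := by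
          rw [div_eq_mul_inv, div_eq_mul_inv, div_eq_mul_inv, div_eq_mul_inv]; ring
      _ = ENNReal.ofReal a * (∫⁻ u in Ioo 0 c', F (kf * u))
          + ENNReal.ofReal b * (∫⁻ u in Ioo 0 c', G (kg * u)) := by rw [hFcomp, hGcomp]
      _ = ∫⁻ u in Ioo 0 c', (ENNReal.ofReal a * F (kf * u) + ENNReal.ofReal b * G (kg * u)) := by
          have hmF : Measurable fun u => F (kf * u) := hFm.comp (measurable_const_mul kf)
          have hmG : Measurable fun u => G (kg * u) := hGm.comp (measurable_const_mul kg)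
          rw [lintegral_add_left (hmF.const_mul _),
            lintegral_const_mul _ hmF, lintegral_const_mul _ hmG]
      _ ≤ ∫⁻ u in Ioo 0 c', Φ u := setLIntegral_mono hΦm hkeyΦ
      _ ≤ ∫⁻ u in Ioi 0, Φ u := lintegral_mono_set Ioo_subset_Ioi_self
      _ = ∫⁻ t, h' t := layerΦ.symm
      _ ≤ ∫⁻ t, h t := hIh'le
  calc X ^ a * Y ^ b
      = c * ((X / M) ^ a * (Y / N) ^ b) := by
        rw [ENNReal.div_rpow_of_nonneg _ _ ha.le, ENNReal.div_rpow_of_nonneg _ _ hb.le,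
          div_eq_mul_inv, div_eq_mul_inv, hcdef]
        rw [show M ^ a * N ^ b * (X ^ a * (M ^ a)⁻¹ * (Y ^ b * (N ^ b)⁻¹))
            = (M ^ a * (M ^ a)⁻¹) * ((N ^ b) * (N ^ b)⁻¹) * (X ^ a * Y ^ b) by ring,
          ENNReal.mul_inv_cancel hMa0 hMatop, ENNReal.mul_inv_cancel hNb0 hNbtop, one_mul,
          one_mul]
    _ ≤ c * (ENNReal.ofReal a * (X / M) + ENNReal.ofReal b * (Y / N)) := by
        exact mul_le_mul_right (ennreal_amgm ha hb hab _ _) c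
    _ ≤ ∫⁻ t, h t := main

/-- Product-space inductive step. -/
lemma bm_prod_step {n : ℕ} {a b : ℝ} (ha : 0 < a) (hb : 0 < b) (hab : a + b = 1)
    (IH : ∀ {A B : Set (Fin n → ℝ)}, IsCompact A → IsCompact B → A.Nonempty → B.Nonempty →
      volume A ^ a * volume B ^ b ≤ volume (a • A + b • B))
    {A B : Set (ℝ × (Fin n → ℝ))} (hA : IsCompact A) (hB : IsCompact B) :
    volume A ^ a * volume B ^ b ≤ volume (a • A + b • B) := by
  set C := a • A + b • B with hCdef
  have hC : IsCompact C := (hA.smul a).add (hB.smul b)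
  have hAm : MeasurableSet A := hA.isClosed.measurableSet
  have hBm : MeasurableSet B := hB.isClosed.measurableSet
  have hCm : MeasurableSet C := hC.isClosed.measurableSet
  set f : ℝ → ℝ≥0∞ := fun r => volume (Prod.mk r ⁻¹' A) with hfdef
  set g : ℝ → ℝ≥0∞ := fun s => volume (Prod.mk s ⁻¹' B) with hgdef
  set h : ℝ → ℝ≥0∞ := fun t => volume (Prod.mk t ⁻¹' C) with hhdef
  have hfm : Measurable f := measurable_measure_prodMk_left hAm
  have hgm : Measurable g := measurable_measure_prodMk_left hBm
  have hhm : Measurable h := measurable_measure_prodMk_left hCm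
  have hvolA : volume A = ∫⁻ r, f r := by
    rw [Measure.volume_eq_prod, Measure.prod_apply hAm]
  have hvolB : volume B = ∫⁻ s, g s := by
    rw [Measure.volume_eq_prod, Measure.prod_apply hBm]
  have hvolC : volume C = ∫⁻ t, h t := by
    rw [Measure.volume_eq_prod, Measure.prod_apply hCm]
  -- sections are contained in the compact projection
  have hsecA : ∀ r, Prod.mk r ⁻¹' A ⊆ Prod.snd '' A := by
    intro r x hx; exact ⟨(r, x), hx, rfl⟩
  have hsecB : ∀ s, Prod.mk s ⁻¹' B ⊆ Prod.snd '' B := by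
    intro s y hy; exact ⟨(s, y), hy, rfl⟩
  have hMtop : (⨆ r, f r) ≠ ⊤ := by
    refine ne_top_of_le_ne_top (hA.image continuous_snd).measure_lt_top.ne
      (iSup_le fun r => measure_mono (hsecA r))
  have hNtop : (⨆ s, g s) ≠ ⊤ := by
    refine ne_top_of_le_ne_top (hB.image continuous_snd).measure_lt_top.ne
      (iSup_le fun s => measure_mono (hsecB s))
  have hIf : ∫⁻ r, f r ≠ ⊤ := hvolA ▸ hA.measure_lt_top.ne
  have hIg : ∫⁻ s, g s ≠ ⊤ := hvolB ▸ hB.measure_lt_top.ne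
  have hkey : ∀ r s, f r ^ a * g s ^ b ≤ h (a * r + b * s) := by
    intro r s
    rcases eq_empty_or_nonempty (Prod.mk r ⁻¹' A) with hAr | hAr
    · rw [hfdef]; simp only [hAr, measure_empty, ENNReal.zero_rpow_of_pos ha, zero_mul]
      exact zero_le
    rcases eq_empty_or_nonempty (Prod.mk s ⁻¹' B) with hBs | hBs
    · rw [hgdef]; simp only [hBs, measure_empty, ENNReal.zero_rpow_of_pos hb, mul_zero]
      exact zero_le
    have hArc : IsCompact (Prod.mk r ⁻¹' A) :=
      (hA.image continuous_snd).of_isClosed_subset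
        (hA.isClosed.preimage (Continuous.prodMk_right r)) (hsecA r)
    have hBsc : IsCompact (Prod.mk s ⁻¹' B) :=
      (hB.image continuous_snd).of_isClosed_subset
        (hB.isClosed.preimage (Continuous.prodMk_right s)) (hsecB s)
    refine (IH hArc hBsc hAr hBs).trans (measure_mono ?_)
    rintro z ⟨x, ⟨x', hx', rfl⟩, y, ⟨y', hy', rfl⟩, rfl⟩
    show (a * r + b * s, a • x' + b • y') ∈ C
    have : (a * r + b * s, a • x' + b • y') = a • ((r, x') : ℝ × (Fin n → ℝ)) + b • (s, y') := rfl
    rw [this, hCdef]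
    exact add_mem_add (smul_mem_smul_set hx') (smul_mem_smul_set hy')
  rw [hvolA, hvolB, hvolC]
  exact oneDim_pl ha hb hab hfm hgm hhm hMtop hNtop hIf hIg hkey

lemma bm_pi : ∀ (n : ℕ) {a b : ℝ}, 0 < a → 0 < b → a + b = 1 →
    ∀ {A B : Set (Fin n → ℝ)}, IsCompact A → IsCompact B → A.Nonempty → B.Nonempty →
    volume A ^ a * volume B ^ b ≤ volume (a • A + b • B) := by
  intro n
  induction n with
  | zero =>
    intro a b ha hb hab A B hA hB hAne hBne
    have hAu : A = univ := hAne.eq_univ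
    have hBu : B = univ := hBne.eq_univ
    have hCu : a • A + b • B = univ := (hAne.smul_set.add hBne.smul_set).eq_univ
    have h1 : volume (univ : Set (Fin 0 → ℝ)) = 1 := by
      rw [volume_pi, Measure.pi_univ]; simp
    rw [hCu, hAu, hBu, h1, ENNReal.one_rpow, ENNReal.one_rpow, one_mul]
  | succ n ih =>
    intro a b ha hb hab A B hA hB hAne hBne
    set e := MeasurableEquiv.piFinSuccAbove (fun _ : Fin (n + 1) => ℝ) 0 with hedef
    have hmp : MeasurePreserving e volume volume :=
      volume_preserving_piFinSuccAbove (fun _ : Fin (n + 1) => ℝ) 0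
    -- e agrees with a linear map
    set L : (Fin (n + 1) → ℝ) →ₗ[ℝ] ℝ × (Fin n → ℝ) :=
      LinearMap.prod (LinearMap.proj 0) (LinearMap.pi fun j => LinearMap.proj ((0 : Fin (n+1)).succAbove j)) with hLdef
    have hLe : ⇑L = ⇑e := rfl
    have hLcont : Continuous L := by
      apply Continuous.prodMk
      · exact continuous_apply _
      · exact continuous_pi fun j => continuous_apply _
    -- images
    have himgA : IsCompact (e '' A) := by rw [← hLe]; exact hA.image hLcont
    have himgB : IsCompact (e '' B) := by rw [← hLe]; exact hB.image hLcont
    have himg : e '' (a • A + b • B) = a • (e '' A) + b • (e '' B) := by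
      rw [← hLe, Set.image_add, image_smul_set, image_smul_set]
    -- volumes
    have hvol : ∀ (X : Set (Fin (n+1) → ℝ)), MeasurableSet X → volume (e '' X) = volume X := by
      intro X hX
      rw [MeasurableEquiv.image_eq_preimage_symm]
      exact (hmp.symm e).measure_preimage hX.nullMeasurableSet
    have hAm : MeasurableSet A := hA.isClosed.measurableSet
    have hBm : MeasurableSet B := hB.isClosed.measurableSet
    have hCc : IsCompact (a • A + b • B) := (hA.smul a).add (hB.smul b)
    have key := bm_prod_step ha hb hab (fun {A' B'} hA' hB' hA'ne hB'ne =>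
      ih ha hb hab hA' hB' hA'ne hB'ne) himgA himgB
    rw [hvol A hAm, hvol B hBm, ← himg, hvol _ hCc.isClosed.measurableSet] at key
    exact key

lemma ennreal_rpow_iSup {ι : Sort*} (g : ι → ℝ≥0∞) {p : ℝ} (hp : 0 < p) :
    (⨆ i, g i) ^ p = ⨆ i, g i ^ p :=
  Monotone.map_iSup_of_continuousAt ENNReal.continuous_rpow_const.continuousAt
    (fun x y hxy => ENNReal.rpow_le_rpow hxy hp.le) (by simp [ENNReal.zero_rpow_of_pos hp])

/-- Compact nonempty case in Euclidean space. -/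
lemma bm_euc {n : ℕ} {a b : ℝ} (ha : 0 < a) (hb : 0 < b) (hab : a + b = 1)
    {A B : Set (EuclideanSpace ℝ (Fin n))} (hA : IsCompact A) (hB : IsCompact B)
    (hAne : A.Nonempty) (hBne : B.Nonempty) :
    volume A ^ a * volume B ^ b ≤ volume (a • A + b • B) := by
  set e := (MeasurableEquiv.toLp 2 (Fin n → ℝ)).symm with hedef
  have hmp : MeasurePreserving e volume volume :=
    EuclideanSpace.volume_preserving_symm_measurableEquiv_toLp (Fin n)
  set L : EuclideanSpace ℝ (Fin n) →ₗ[ℝ] (Fin n → ℝ) :=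
    (EuclideanSpace.equiv (Fin n) ℝ).toLinearEquiv.toLinearMap with hLdef
  have hLe : ⇑L = ⇑e := rfl
  have hLcont : Continuous L := by
    rw [hLe, ← hLe]
    exact (EuclideanSpace.equiv (Fin n) ℝ).continuous
  have himgA : IsCompact (e '' A) := by rw [← hLe]; exact hA.image hLcont
  have himgB : IsCompact (e '' B) := by rw [← hLe]; exact hB.image hLcont
  have himg : e '' (a • A + b • B) = a • (e '' A) + b • (e '' B) := by
    rw [← hLe, Set.image_add, image_smul_set, image_smul_set]
  have hvol : ∀ (X : Set (EuclideanSpace ℝ (Fin n))), MeasurableSet X →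
      volume (e '' X) = volume X := by
    intro X hX
    rw [MeasurableEquiv.image_eq_preimage_symm]
    exact (hmp.symm e).measure_preimage hX.nullMeasurableSet
  have hCc : IsCompact (a • A + b • B) := (hA.smul a).add (hB.smul b)
  have key := bm_pi n ha hb hab himgA himgB (hAne.image _) (hBne.image _)
  rw [hvol A hA.isClosed.measurableSet, hvol B hB.isClosed.measurableSet, ← himg,
    hvol _ hCc.isClosed.measurableSet] at key
  exact key

theorem brunn_minkowski_multiplicative (n : ℕ) (a b : ℝ) (ha : 0 < a) (hb : 0 < b)
    (hab : a + b = 1) (A B : Set (EuclideanSpace ℝ (Fin n)))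
    (hAbd : IsBounded A) (hBbd : IsBounded B)
    (hAm : MeasurableSet A) (hBm : MeasurableSet B)
    (hABm : MeasurableSet (a • A + b • B)) :
    volume A ^ a * volume B ^ b ≤ volume (a • A + b • B) := by
  have hAfin : volume A ≠ ⊤ := hAbd.measure_lt_top.ne
  have hBfin : volume B ≠ ⊤ := hBbd.measure_lt_top.ne
  have hAreg := hAm.measure_eq_iSup_isCompact_of_ne_top hAfin
  have hBreg := hBm.measure_eq_iSup_isCompact_of_ne_top hBfin
  -- rpow commutes with iSup
  have hsupA : volume A ^ a = ⨆ (K) (_ : K ⊆ A) (_ : IsCompact K), volume K ^ a := by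
    rw [hAreg, ennreal_rpow_iSup _ ha]
    congr 1; ext K
    rw [ennreal_rpow_iSup _ ha]
    congr 1; ext hKA
    rw [ennreal_rpow_iSup _ ha]
  have hsupB : volume B ^ b = ⨆ (L) (_ : L ⊆ B) (_ : IsCompact L), volume L ^ b := by
    rw [hBreg, ennreal_rpow_iSup _ hb]
    congr 1; ext L
    rw [ennreal_rpow_iSup _ hb]
    congr 1; ext hLB
    rw [ennreal_rpow_iSup _ hb]
  rw [hsupA, hsupB]
  rw [ENNReal.iSup_mul]
  refine iSup_le fun K => ?_
  rw [ENNReal.iSup_mul]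
  refine iSup_le fun hKA => ?_
  rw [ENNReal.iSup_mul]
  refine iSup_le fun hKc => ?_
  rw [ENNReal.mul_iSup]
  refine iSup_le fun L => ?_
  rw [ENNReal.mul_iSup]
  refine iSup_le fun hLB => ?_
  rw [ENNReal.mul_iSup]
  refine iSup_le fun hLc => ?_
  -- core bound for compact K ⊆ A, L ⊆ B
  rcases K.eq_empty_or_nonempty with rfl | hKne
  · simp [ENNReal.zero_rpow_of_pos ha]
  rcases L.eq_empty_or_nonempty with rfl | hLne
  · simp [ENNReal.zero_rpow_of_pos hb]
  refine (bm_euc ha hb hab hKc hLc hKne hLne).trans (measure_mono ?_)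
  exact add_subset_add (smul_set_mono hKA) (smul_set_mono hLB)
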